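/- Let P be super essential, and let I, Ī be distinct indices with S_j(f_I) ≠ ∅ and S_j(f_Ī) ≠ ∅, such that Jac(O(P_{I,Ī})^j) = -∞ (the order matrix with rows I, Ī and column j removed has no finite diagonal). Then there exists I' ≠ Ī with S_j(f_{I'}) ≠ ∅ such that o_{Ī,j} − γ_j ≤ J_{I'} − γ, and moreover if I ≠ I' then o_{I',j} − γ_j ≤ J_I − γ. -/

import Mathlib

open Finset

/-- Laurent differential polynomials in the differential indeterminates
`u_1, …, u_p` over a coefficient ring `D`, modelled as finitely supported
families of coefficients indexed by Laurent exponent vectors on the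
variables `u_{j,k}` (`u_{j,k}` = the `k`-th derivative of `u_j`). -/
abbrev LaurentDiffPoly (D : Type*) [CommRing D] (p : ℕ) : Type _ :=
  ((Fin p × ℕ) →₀ ℤ) →₀ D

/-- differential support of `f` in `u_j`: the orders `k` of the derivatives
`u_{j,k}` effectively appearing in `f`. -/
noncomputable def SjF {D : Type*} [CommRing D] {p : ℕ} (j : Fin p)
    (f : LaurentDiffPoly D p) : Finset ℕ :=
  f.support.biUnion (fun e => (e.support.filter (fun v => v.1 = j)).image Prod.snd)

/-- the formal total derivative: `d` on coefficients, `u_{j,k} ↦ u_{j,k+1}`. -/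
noncomputable def laurentDeriv {D : Type*} [CommRing D] {p : ℕ} (d : D → D)
    (f : LaurentDiffPoly D p) : LaurentDiffPoly D p :=
  f.sum (fun e a =>
    Finsupp.single e (d a)
      + e.sum (fun v n =>
          Finsupp.single (e - Finsupp.single v 1 + Finsupp.single (v.1, v.2 + 1) 1) (n • a)))

/-- `ord(f, u_j) ∈ ℕ ∪ {-∞}`. -/
noncomputable def ordJ {D : Type*} [CommRing D] {p : ℕ} (j : Fin p)
    (f : LaurentDiffPoly D p) : WithBot ℕ := (SjF j f).max

/-- the Jacobi number `J_i` of the order matrix of the system with the `i`-th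
row removed: the max over its diagonals (bijections onto the columns). -/
noncomputable def jacobiNumber {D : Type*} [CommRing D] {p : ℕ}
    (f : Fin (p+1) → LaurentDiffPoly D p) (i : Fin (p+1)) : WithBot ℕ :=
  Finset.univ.sup (fun σ : Equiv.Perm (Fin p) => ∑ k, ordJ (σ k) (f (i.succAbove k)))



lemma auxSumNeBot {α : Type*} (s : Finset α) (g : α → WithBot ℕ)
    (h : ∀ a ∈ s, g a ≠ ⊥) : ∑ a ∈ s, g a ≠ ⊥ := by
  classical
  induction s using Finset.induction_on with
  | empty => simp
  | insert _ _ hx ih =>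
    rename_i a s
    rw [Finset.sum_insert hx, Ne, WithBot.add_eq_bot]
    push_neg
    exact ⟨h a (mem_insert_self a s), ih fun b hb => h b (mem_insert_of_mem hb)⟩

lemma auxNeBotOfSum {α : Type*} (s : Finset α) (g : α → WithBot ℕ)
    (h : ∑ a ∈ s, g a ≠ ⊥) : ∀ a ∈ s, g a ≠ ⊥ := by
  classical
  intro a ha hbot
  apply h
  rw [← Finset.add_sum_erase s g ha, hbot, WithBot.bot_add]

set_option maxHeartbeats 2000000 in
lemma auxCore {n : ℕ} (E : Fin (n+1) → Fin n → Prop) (I Ib : Fin (n+1)) (j : Fin n)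
    (hIIb : I ≠ Ib)
    (σ : Fin (n+1) ≃ Option (Fin n)) (hσI : σ I = none)
    (hσE : ∀ r c, σ r = some c → E r c)
    (ρ : Fin (n+1) ≃ Option (Fin n)) (hρIb : ρ Ib = none)
    (hρE : ∀ r c, ρ r = some c → E r c)
    (hJac : ∀ m : Fin (n+1) ≃ Option (Fin n), m I = none → m Ib = some j →
      (∀ r c, r ≠ Ib → m r = some c → E r c) → False) :
    ∃ (I' : Fin (n+1)) (ν : Fin (n+1) ≃ Option (Fin n)),
      I' ≠ Ib ∧ σ I' = some j ∧ ν I' = none ∧ ν Ib = some j ∧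
      (∀ r c, r ≠ Ib → ν r = some c → E r c) := by
  classical
  set I' : Fin (n+1) := σ.symm (some j) with hI'def
  have hσI' : σ I' = some j := σ.apply_symm_apply _
  have hI'I : I' ≠ I := by
    intro h; rw [h, hσI] at hσI'; exact Option.some_ne_none _ hσI'.symm
  have hI'Ib : I' ≠ Ib := by
    intro h
    exact hJac σ hσI (h ▸ hσI') (fun r c _ => hσE r c)
  obtain ⟨φ, hφap⟩ : ∃ φ : Equiv.Perm (Fin (n+1)), ∀ x, φ x = ρ.symm (σ x) :=
    ⟨σ.trans ρ.symm, fun _ => rfl⟩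
  have hφI : φ I = Ib := by
    rw [hφap, hσI, Equiv.symm_apply_eq, hρIb]
  obtain ⟨r, hr0, hrS, hrAdd⟩ :
      ∃ r : ℕ → Fin (n+1), r 0 = Ib ∧ (∀ t, r (t+1) = φ (r t)) ∧
        (∀ s t, r (s + t) = (φ ^ s) (r t)) := by
    refine ⟨fun t => (φ ^ t) Ib, rfl, fun t => ?_, fun s t => ?_⟩
    · show (φ ^ (t+1)) Ib = φ ((φ ^ t) Ib)
      rw [pow_succ' φ t]
      rfl
    · show (φ ^ (s + t)) Ib = (φ ^ s) ((φ ^ t) Ib)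
      rw [pow_add]
      rfl
  -- termination
  have hex : ∃ t, r (t+1) = I ∨ r (t+1) = I' := by
    set m := orderOf φ with hm
    have hm1 : φ ^ m = 1 := pow_orderOf_eq_one φ
    have hmpos : 0 < m := orderOf_pos φ
    have hm2 : 2 ≤ m := by
      rcases Nat.lt_or_ge m 2 with h | h
      · exfalso
        have hm1' : m = 1 := by omega
        have : φ = 1 := by rwa [hm1', pow_one] at hm1
        rw [this] at hφI
        exact hIIb hφI
      · exact h
    refine ⟨m - 2, Or.inl ?_⟩
    have h1 : r m = Ib := by
      have h := (congrArg r (by omega : m = m + 0)).trans (hrAdd m 0)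
      rw [hr0, hm1] at h
      exact h
    have h2 : m - 2 + 1 + 1 = m := by omega
    have h3 : φ (r (m - 2 + 1)) = Ib := by rw [← hrS, h2, h1]
    apply φ.injective
    rw [h3, hφI]
  obtain ⟨k, hk, hmink0⟩ : ∃ k, (r (k+1) = I ∨ r (k+1) = I') ∧
      ∀ t, t < k → ¬(r (t+1) = I ∨ r (t+1) = I') :=
    ⟨Nat.find hex, Nat.find_spec hex, fun t ht => Nat.find_min hex ht⟩
  have hmink : ∀ t, t < k → r (t+1) ≠ I ∧ r (t+1) ≠ I' := by
    intro t ht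
    have := hmink0 t ht
    push_neg at this
    exact this
  have hno : ∀ t, t ≤ k → r t ≠ I ∧ r t ≠ I' := by
    intro t ht
    cases t with
    | zero => exact ⟨hr0 ▸ hIIb.symm, hr0 ▸ (Ne.symm hI'Ib)⟩
    | succ u => exact hmink u (by omega)
  have hinj : ∀ s t, s ≤ k+1 → t ≤ k+1 → r s = r t → s = t := by
    have key : ∀ s t, s < t → t ≤ k + 1 → r s ≠ r t := by
      intro s t hst htk heq
      have hu : r (t - s) = Ib := by
        apply (φ ^ s).injective
        calc (φ ^ s) (r (t-s)) = r (s + (t-s)) := (hrAdd s (t-s)).symm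
          _ = r t := congrArg r (by omega)
          _ = r s := heq.symm
          _ = (φ ^ s) (r 0) := (congrArg r (by omega : s = s + 0)).trans (hrAdd s 0)
          _ = (φ ^ s) Ib := by rw [hr0]
      have h1 : 1 ≤ t - s := by omega
      have h2 : φ (r (t - s - 1)) = Ib := by
        rw [← hrS]
        have he : t - s - 1 + 1 = t - s := by omega
        rw [he]; exact hu
      have h3 : r (t - s - 1) = I := by
        apply φ.injective; rw [h2, hφI]
      rcases Nat.eq_zero_or_pos (t - s - 1) with h | h
      · rw [h, hr0] at h3; exact hIIb h3.symm
      · have h4 : t - s - 1 ≤ k := by omega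
        have := hno (t - s - 1) h4
        exact this.1 h3
    intro s t hs ht heq
    rcases lt_trichotomy s t with h | h | h
    · exact absurd heq (key s t h ht)
    · exact h
    · exact absurd heq.symm (key t s h hs)
  -- the path as a list (from the far end back to Ib)
  set L : List (Fin (n+1)) := (List.range (k+2)).map (fun t => r (k+1-t)) with hLdef
  have hLlen : L.length = k+2 := by simp [hLdef]
  have hbL : ∀ i, i < k+2 → i < L.length := fun i h => by rw [hLlen]; exact h
  have hLget : ∀ i (h : i < k+2), L[i]'(hbL i h) = r (k+1-i) := by
    intro i h
    simp [hLdef]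
  have hLmem : ∀ x, x ∈ L ↔ ∃ t, t ≤ k+1 ∧ x = r t := by
    intro x
    simp only [hLdef, List.mem_map, List.mem_range]
    constructor
    · rintro ⟨a, ha, rfl⟩
      exact ⟨k+1-a, by omega, rfl⟩
    · rintro ⟨t, ht, rfl⟩
      exact ⟨k+1-t, by omega, by congr 1; omega⟩
  have hLnodup : L.Nodup := by
    rw [hLdef]
    refine List.Nodup.map_on ?_ List.nodup_range
    intro a ha b hb heq
    simp only [List.mem_range] at ha hb
    have := hinj (k+1-a) (k+1-b) (by omega) (by omega) heq
    omega
  -- ρ-edge fact along the path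
  have hρedge : ∀ t, t ≤ k → ρ (r (t+1)) = σ (r t) := by
    intro t ht
    have h : r (t+1) = ρ.symm (σ (r t)) := by rw [hrS t, hφap]
    rw [h, Equiv.apply_symm_apply]
  rcases hk with hgood | hbad
  · -- good case : terminal is I ; produce ν avoiding I'
    set ℓ : List (Fin (n+1)) := I' :: L with hℓdef
    have hI'L : I' ∉ L := by
      rw [hLmem]
      rintro ⟨t, ht, heq⟩
      rcases Nat.lt_or_ge t (k+1) with h | h
      · exact (hno t (by omega)).2 heq.symm
      · have : t = k+1 := by omega
        rw [this, hgood] at heq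
        exact hI'I heq
    have hℓnodup : ℓ.Nodup := List.nodup_cons.mpr ⟨hI'L, hLnodup⟩
    set s : Equiv.Perm (Fin (n+1)) := ℓ.formPerm with hsdef
    have hℓlen : ℓ.length = k+3 := by rw [hℓdef, List.length_cons, hLlen]
    have hbℓ : ∀ i, i < k+3 → i < ℓ.length := fun i h => by rw [hℓlen]; exact h
    have hℓget0 : ℓ[0]'(hbℓ 0 (by omega)) = I' := rfl
    have hℓgetS : ∀ i (h : i < k+2), ℓ[i+1]'(hbℓ (i+1) (by omega)) = r (k+1-i) := by
      intro i h
      have h5 : ℓ[i+1]'(hbℓ (i+1) (by omega)) = L[i]'(hbL i h) := List.getElem_cons_succ ..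
      rw [h5]
      exact hLget i h
    have hsI' : s I' = I := by
      have h1 : s (ℓ[0]'(hbℓ 0 (by omega))) = ℓ[1]'(hbℓ 1 (by omega)) :=
        List.formPerm_apply_getElem_zero ℓ hℓnodup (hbℓ 1 (by omega))
      rw [hℓget0] at h1
      have h2 : ℓ[1]'(hbℓ 1 (by omega)) = r (k+1) := by
        have := hℓgetS 0 (by omega)
        simpa using this
      rw [h2, hgood] at h1
      exact h1
    have hsr : ∀ t, t ≤ k → s (r (t+1)) = r t := by
      intro t ht
      have h1 : s (ℓ[(k-t)+1]'(hbℓ ((k-t)+1) (by omega))) = ℓ[(k-t)+2]'(hbℓ ((k-t)+2) (by omega)) :=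
        List.formPerm_apply_lt_getElem ℓ hℓnodup ((k-t)+1) (hbℓ ((k-t)+2) (by omega))
      have h2 : ℓ[(k-t)+1]'(hbℓ ((k-t)+1) (by omega)) = r (t+1) := by
        have h := hℓgetS (k-t) (by omega)
        exact h.trans (congrArg r (by omega : k+1-(k-t) = t+1))
      have h3 : ℓ[(k-t)+2]'(hbℓ ((k-t)+2) (by omega)) = r t := by
        have h := hℓgetS (k-t+1) (by omega)
        exact h.trans (congrArg r (by omega : k+1-(k-t+1) = t))
      rw [h2, h3] at h1
      exact h1
    have hsIb : s Ib = I' := by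
      have h1 : s (ℓ.getLast (List.cons_ne_nil _ _)) = I' := List.formPerm_apply_getLast I' L
      have h2 : ℓ.getLast (List.cons_ne_nil _ _) = Ib := by
        rw [List.getLast_eq_getElem]
        have h4 := hℓgetS (k+1) (by omega)
        simp only [Nat.sub_self] at h4
        rw [hr0] at h4
        have h6 : ℓ.length - 1 = (k+1)+1 := by omega
        rw [← h4]
        exact getElem_congr_idx h6
      rw [h2] at h1
      exact h1
    set ν : Fin (n+1) ≃ Option (Fin n) := s.trans σ with hνdef
    have hνI' : ν I' = none := by
      show σ (s I') = none
      rw [hsI', hσI]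
    have hνIb : ν Ib = some j := by
      show σ (s Ib) = some j
      rw [hsIb, hσI']
    refine ⟨I', ν, hI'Ib, hσI', hνI', hνIb, ?_⟩
    intro x c hxIb hνx
    by_cases hxℓ : x ∈ ℓ
    · rw [hℓdef, List.mem_cons] at hxℓ
      rcases hxℓ with rfl | hxL
      · rw [hνI'] at hνx
        exact absurd hνx.symm (Option.some_ne_none _)
      · rw [hLmem] at hxL
        obtain ⟨t, ht, rfl⟩ := hxL
        cases t with
        | zero => rw [hr0] at hxIb ⊢; exact absurd rfl hxIb
        | succ u =>
          have hu : u ≤ k := by omega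
          have h7 : ν (r (u+1)) = σ (r u) := by
            show σ (s (r (u+1))) = σ (r u)
            rw [hsr u hu]
          rw [h7] at hνx
          have h8 := hρedge u hu
          rw [hνx] at h8
          exact hρE _ _ h8
    · have h9 : ν x = σ x := by
        show σ (s x) = σ x
        rw [List.formPerm_apply_of_notMem hxℓ]
      rw [h9] at hνx
      exact hσE _ _ hνx
  · -- bad case : terminal is I' ; contradict hJac
    exfalso
    set s : Equiv.Perm (Fin (n+1)) := L.formPerm with hsdef
    have hIL : I ∉ L := by
      rw [hLmem]
      rintro ⟨t, ht, heq⟩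
      rcases Nat.lt_or_ge t (k+1) with h | h
      · exact (hno t (by omega)).1 heq.symm
      · have : t = k+1 := by omega
        rw [this, hbad] at heq
        exact hI'I heq.symm
    have hsr : ∀ t, t ≤ k → s (r (t+1)) = r t := by
      intro t ht
      have h1 : s (L[k-t]'(hbL (k-t) (by omega))) = L[(k-t)+1]'(hbL ((k-t)+1) (by omega)) :=
        List.formPerm_apply_lt_getElem L hLnodup (k-t) (hbL ((k-t)+1) (by omega))
      have h2 : L[k-t]'(hbL (k-t) (by omega)) = r (t+1) := by
        have h := hLget (k-t) (by omega)
        exact h.trans (congrArg r (by omega : k+1-(k-t) = t+1))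
      have h3 : L[(k-t)+1]'(hbL ((k-t)+1) (by omega)) = r t := by
        have h := hLget (k-t+1) (by omega)
        exact h.trans (congrArg r (by omega : k+1-(k-t+1) = t))
      rw [h2, h3] at h1
      exact h1
    have hsIb : s Ib = I' := by
      have hmlt : (k+1+1) % L.length < L.length := Nat.mod_lt _ (by rw [hLlen]; omega)
      have h1 : s (L[k+1]'(hbL (k+1) (by omega))) = L[(k+1+1) % L.length]'hmlt :=
        List.formPerm_apply_getElem L hLnodup (k+1) (hbL (k+1) (by omega))
      have h2 : L[k+1]'(hbL (k+1) (by omega)) = Ib := by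
        have h := hLget (k+1) (by omega)
        simpa [hr0] using h
      have h3 : L[(k+1+1) % L.length]'hmlt = I' := by
        have h0 : L[0]'(hbL 0 (by omega)) = r (k+1) := by simpa using hLget 0 (by omega)
        rw [hbad] at h0
        rw [← h0]
        apply getElem_congr_idx
        rw [hLlen]
        simp
      rw [h2, h3] at h1
      exact h1
    set m : Fin (n+1) ≃ Option (Fin n) := s.trans σ with hmdef
    have hmI : m I = none := by
      show σ (s I) = none
      rw [List.formPerm_apply_of_notMem hIL, hσI]
    have hmIb : m Ib = some j := by
      show σ (s Ib) = some j
      rw [hsIb, hσI']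
    refine hJac m hmI hmIb ?_
    intro x c hxIb hmx
    by_cases hxL : x ∈ L
    · rw [hLmem] at hxL
      obtain ⟨t, ht, rfl⟩ := hxL
      cases t with
      | zero => rw [hr0] at hxIb ⊢; exact absurd rfl hxIb
      | succ u =>
        rcases Nat.lt_or_ge u (k+1) with hu | hu
        · have hu' : u ≤ k := by omega
          have h7 : m (r (u+1)) = σ (r u) := by
            show σ (s (r (u+1))) = σ (r u)
            rw [hsr u hu']
          rw [h7] at hmx
          have h8 := hρedge u hu'
          rw [hmx] at h8
          exact hρE _ _ h8
        · omega
    · have h9 : m x = σ x := by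
        show σ (s x) = σ x
        rw [List.formPerm_apply_of_notMem hxL]
      rw [h9] at hmx
      exact hσE _ _ hmx

lemma auxMatchBound {D : Type*} [CommRing D] {p : ℕ}
    (f : Fin (p+1) → LaurentDiffPoly D p)
    (γ : Fin p → ℕ)
    (hγle : ∀ (c : Fin p) (rr : Fin (p+1)) (x : ℕ), x ∈ SjF c (f rr) → γ c ≤ x)
    (j : Fin p) (X Y : Fin (p+1)) (hYX : Y ≠ X)
    (M : Fin (p+1) ≃ Option (Fin p)) (hMX : M X = none) (hMY : M Y = some j)
    (hME : ∀ r c, M r = some c → (SjF c (f r)).Nonempty)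
    (Jx : ℕ) (hJx : (Jx : WithBot ℕ) = jacobiNumber f X) :
    (SjF j (f Y)).sup id + ∑ c ∈ Finset.univ.erase j, γ c ≤ Jx := by
  classical
  have hYne : (SjF j (f Y)).Nonempty := hME Y j hMY
  set e₁ : Option (Fin p) ≃ Option (Fin p) := (finSuccEquiv' X).symm.trans M with he₁
  have he₁some : ∀ a : Fin p, e₁ (some a) = M (X.succAbove a) := by
    intro a
    have h : (finSuccEquiv' X).symm (some a) = X.succAbove a := by
      rw [Equiv.symm_apply_eq, finSuccEquiv'_succAbove]
    show M ((finSuccEquiv' X).symm (some a)) = _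
    rw [h]
  have he₁n : ∀ a, ∃ b, e₁ (some a) = some b := by
    intro a
    rcases h : e₁ (some a) with _ | b
    · exfalso
      rw [he₁some] at h
      have h2 := M.injective (h.trans hMX.symm)
      exact Fin.succAbove_ne X a h2
    · exact ⟨b, rfl⟩
  set π : Fin p ≃ Fin p := e₁.removeNone with hπ
  have hπa : ∀ a, M (X.succAbove a) = some (π a) := by
    intro a
    have h := Equiv.removeNone_aux_some e₁ (he₁n a)
    rw [he₁some] at h
    exact h.symm
  obtain ⟨kb, hkb⟩ := Fin.exists_succAbove_eq hYX
  have hπkb : π kb = j := by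
    have h := hπa kb
    rw [hkb, hMY] at h
    exact (Option.some.inj h).symm
  have hterm : ∀ a, (SjF (π a) (f (X.succAbove a))).Nonempty := fun a => hME _ _ (hπa a)
  have hsum : ∑ a : Fin p, ordJ (π a) (f (X.succAbove a)) ≤ jacobiNumber f X := by
    exact Finset.le_sup (α := WithBot ℕ)
      (f := fun σ : Equiv.Perm (Fin p) => ∑ k, ordJ (σ k) (f (X.succAbove k)))
      (Finset.mem_univ π)
  have hlow : ∀ a : Fin p,
      (((if a = kb then (SjF j (f Y)).sup id else γ (π a)) : ℕ) : WithBot ℕ)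
        ≤ ordJ (π a) (f (X.succAbove a)) := by
    intro a
    by_cases ha : a = kb
    · subst ha
      rw [if_pos rfl, hkb, hπkb]
      have heq : (((SjF j (f Y)).sup id : ℕ) : WithBot ℕ) = ordJ j (f Y) := by
        rw [← Finset.sup'_eq_sup hYne id, ← Finset.max'_eq_sup']
        rw [Nat.cast_withBot]
        exact Finset.coe_max' hYne
      exact le_of_eq heq
    · rw [if_neg ha]
      obtain ⟨x, hx⟩ := hterm a
      have h1 : γ (π a) ≤ x := hγle _ _ x hx
      calc ((γ (π a) : ℕ) : WithBot ℕ) ≤ (x : ℕ) := by exact_mod_cast h1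
        _ ≤ ordJ (π a) (f (X.succAbove a)) := by
            rw [Nat.cast_withBot]
            exact Finset.le_max hx
  have h2 : ∑ a : Fin p,
      (((if a = kb then (SjF j (f Y)).sup id else γ (π a)) : ℕ) : WithBot ℕ)
      ≤ ∑ a : Fin p, ordJ (π a) (f (X.succAbove a)) :=
    Finset.sum_le_sum (fun a _ => hlow a)
  have h3 : ∑ a : Fin p, (if a = kb then (SjF j (f Y)).sup id else γ (π a))
      = (SjF j (f Y)).sup id + ∑ c ∈ Finset.univ.erase j, γ c := by
    rw [← Finset.add_sum_erase _ _ (Finset.mem_univ kb), if_pos rfl]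
    congr 1
    refine (Finset.sum_congr rfl fun a ha => if_neg (Finset.ne_of_mem_erase ha)).trans ?_
    refine Finset.sum_equiv π (fun a => ?_) (fun a _ => rfl)
    simp only [Finset.mem_erase, Finset.mem_univ, and_true]
    constructor
    · intro h hc
      exact h (π.injective (hc.trans hπkb.symm))
    · intro h hc
      exact h (hc ▸ hπkb)
  have h4 : (((SjF j (f Y)).sup id + ∑ c ∈ Finset.univ.erase j, γ c : ℕ) : WithBot ℕ)
      ≤ (Jx : WithBot ℕ) := by
    rw [hJx, ← h3]
    refine le_trans ?_ (le_trans h2 hsum)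
    rw [Nat.cast_sum]
  exact_mod_cast h4


/-- Lemma lem-I_Ip (2): let `P` be super essential and `I ≠ Ī`
with `S_j(f_I) ≠ ∅`, `S_j(f_Ī) ≠ ∅`, such that the order matrix with rows
`I, Ī` and column `j` removed has no finite diagonal
(`Jac(O(P_{I,Ī})^j) = -∞`).  Then there is `I' ≠ Ī` with `S_j(f_{I'}) ≠ ∅`,
`o_{Ī,j} − γ_j ≤ J_{I'} − γ`, and if moreover `I ≠ I'` then
`o_{I',j} − γ_j ≤ J_I − γ`. -/
theorem exists_index_order_le_jacobi_two_rows
    {D : Type*} [CommRing D] [IsDomain D] [CharZero D] {p : ℕ}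
    (f : Fin (p+1) → LaurentDiffPoly D p)
    (hP1 : ∀ i, ∃ j, (SjF j (f i)).Nonempty)
    (hP2 : Function.Injective f)
    (hP3 : ∀ j : Fin p, (Finset.univ.biUnion fun i => SjF j (f i)).Nonempty)
    (hsuper : ∀ i, (0 : WithBot ℕ) ≤ jacobiNumber f i)
    (Jn : Fin (p+1) → ℕ) (hJn : ∀ i, (Jn i : WithBot ℕ) = jacobiNumber f i)
    (γ : Fin p → ℕ)
    (hγ : ∀ j, γ j = (Finset.univ.biUnion fun i => SjF j (f i)).min' (hP3 j))
    (γs : ℕ) (hγs : γs = ∑ j, γ j)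
    (j : Fin p) (I Ib : Fin (p+1)) (hII : I ≠ Ib)
    (hI : (SjF j (f I)).Nonempty) (hIb : (SjF j (f Ib)).Nonempty)
    (hJac2 :
      Finset.univ.sup
        (fun e : ({l : Fin (p+1) // l ≠ I ∧ l ≠ Ib} ≃ {c : Fin p // c ≠ j}) =>
          ∑ l : {l : Fin (p+1) // l ≠ I ∧ l ≠ Ib}, ordJ (e l).1 (f l.1)) = ⊥) :
    ∃ I' : Fin (p+1), I' ≠ Ib ∧ (SjF j (f I')).Nonempty ∧
      ((((SjF j (f Ib)).sup id : ℕ) : ℤ) - (γ j : ℤ)) ≤ ((Jn I' : ℤ) - (γs : ℤ)) ∧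
      (I ≠ I' →
        ((((SjF j (f I')).sup id : ℕ) : ℤ) - (γ j : ℤ)) ≤ ((Jn I : ℤ) - (γs : ℤ))) := by
  classical
  -- lower bound for entries via γ
  have hγle : ∀ (c : Fin p) (rr : Fin (p+1)) (x : ℕ), x ∈ SjF c (f rr) → γ c ≤ x := by
    intro c rr x hx
    rw [hγ c]
    exact Finset.min'_le _ _ (Finset.mem_biUnion.mpr ⟨rr, Finset.mem_univ rr, hx⟩)
  -- existence of a totally finite matching avoiding any given row
  have hmatch : ∀ i : Fin (p+1), ∃ M : Fin (p+1) ≃ Option (Fin p),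
      M i = none ∧ (∀ r c, M r = some c → (SjF c (f r)).Nonempty) := by
    intro i
    obtain ⟨π, -, hπ⟩ := Finset.exists_mem_eq_sup (Finset.univ : Finset (Equiv.Perm (Fin p)))
      Finset.univ_nonempty (fun σ : Equiv.Perm (Fin p) => ∑ k, ordJ (σ k) (f (i.succAbove k)))
    have hsum : (Jn i : WithBot ℕ) = ∑ k, ordJ (π k) (f (i.succAbove k)) := by
      rw [hJn i]; exact hπ
    have hne : ∀ a ∈ (Finset.univ : Finset (Fin p)), ordJ (π a) (f (i.succAbove a)) ≠ ⊥ := by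
      apply auxNeBotOfSum
      rw [← hsum, Nat.cast_withBot]
      exact WithBot.coe_ne_bot
    refine ⟨(finSuccEquiv' i).trans (Equiv.optionCongr π), ?_, ?_⟩
    · show Equiv.optionCongr π (finSuccEquiv' i i) = none
      rw [finSuccEquiv'_at]
      rfl
    · intro rr c hrc
      have hri : rr ≠ i := by
        intro h
        subst h
        have h0 : ((finSuccEquiv' rr).trans (Equiv.optionCongr π)) rr = none := by
          show Equiv.optionCongr π (finSuccEquiv' rr rr) = none
          rw [finSuccEquiv'_at]
          rfl
        rw [h0] at hrc
        exact Option.some_ne_none _ hrc.symm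
      obtain ⟨a, ha⟩ := Fin.exists_succAbove_eq hri
      have h5 : ((finSuccEquiv' i).trans (Equiv.optionCongr π)) (i.succAbove a) = some (π a) := by
        show Equiv.optionCongr π (finSuccEquiv' i (i.succAbove a)) = some (π a)
        rw [finSuccEquiv'_succAbove]
        rfl
      rw [← ha, h5] at hrc
      obtain rfl : π a = c := Option.some.inj hrc
      rw [← ha]
      have h6 := hne a (Finset.mem_univ a)
      show (SjF (π a) (f (i.succAbove a))).Nonempty
      rw [Finset.nonempty_iff_ne_empty]
      intro h7
      apply h6
      show (SjF (π a) (f (i.succAbove a))).max = ⊥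
      rw [Finset.max_eq_bot]
      exact h7
  obtain ⟨σ, hσI, hσE⟩ := hmatch I
  obtain ⟨ρ, hρIb, hρE⟩ := hmatch Ib
  -- hJac2 reformulated
  have hJac : ∀ m : Fin (p+1) ≃ Option (Fin p), m I = none → m Ib = some j →
      (∀ r c, r ≠ Ib → m r = some c → (SjF c (f r)).Nonempty) → False := by
    intro m hmI hmIb hmE
    have hsome : ∀ l : {l : Fin (p+1) // l ≠ I ∧ l ≠ Ib}, (m l.1).isSome := by
      intro l
      rcases h : m l.1 with _ | b
      · exact absurd (m.injective (h.trans hmI.symm)) l.2.1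
      · rfl
    have hEx : ∃ e : {l : Fin (p+1) // l ≠ I ∧ l ≠ Ib} ≃ {c : Fin p // c ≠ j},
        ∀ l, m l.1 = some (e l).1 := by
      refine ⟨⟨fun l => ⟨(m l.1).get (hsome l), ?_⟩,
        fun c => ⟨m.symm (some c.1), ?_, ?_⟩, ?_, ?_⟩, ?_⟩
      · intro hcj
        have hg : m l.1 = some j := by
          rw [← hcj]
          exact (Option.some_get (hsome l)).symm
        exact l.2.2 (m.injective (hg.trans hmIb.symm))
      · intro h
        have h2 : m I = some c.1 := by rw [← h, Equiv.apply_symm_apply]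
        rw [hmI] at h2
        exact Option.some_ne_none _ h2.symm
      · intro h
        have h2 : m Ib = some c.1 := by rw [← h, Equiv.apply_symm_apply]
        rw [hmIb] at h2
        exact c.2 (Option.some.inj h2).symm
      · intro l
        apply Subtype.ext
        show m.symm (some ((m l.1).get (hsome l))) = l.1
        rw [Option.some_get, Equiv.symm_apply_apply]
      · intro c
        apply Subtype.ext
        show (m (m.symm (some c.1))).get _ = c.1
        simp
      · intro l
        exact (Option.some_get (hsome l)).symm
    obtain ⟨e, he⟩ := hEx
    have hterm : ∀ l : {l : Fin (p+1) // l ≠ I ∧ l ≠ Ib}, ordJ (e l).1 (f l.1) ≠ ⊥ := by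
      intro l
      have hne := hmE l.1 (e l).1 l.2.2 (he l)
      show (SjF (e l).1 (f l.1)).max ≠ ⊥
      rw [Ne, Finset.max_eq_bot, ← Finset.not_nonempty_iff_eq_empty]
      exact fun h => h hne
    have hsumne := auxSumNeBot Finset.univ
      (fun l : {l : Fin (p+1) // l ≠ I ∧ l ≠ Ib} => ordJ (e l).1 (f l.1))
      (fun l _ => hterm l)
    have hle : ∑ l : {l : Fin (p+1) // l ≠ I ∧ l ≠ Ib}, ordJ (e l).1 (f l.1) ≤ ⊥ := by
      rw [← hJac2]
      exact Finset.le_sup (α := WithBot ℕ)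
        (f := fun e : ({l : Fin (p+1) // l ≠ I ∧ l ≠ Ib} ≃ {c : Fin p // c ≠ j}) =>
          ∑ l : {l : Fin (p+1) // l ≠ I ∧ l ≠ Ib}, ordJ (e l).1 (f l.1))
        (Finset.mem_univ e)
    exact hsumne (le_bot_iff.mp hle)
  -- apply the combinatorial core
  obtain ⟨I', ν, hI'Ib, hσI', hνI', hνIb, hνE'⟩ :=
    auxCore (fun rr c => (SjF c (f rr)).Nonempty) I Ib j hII σ hσI hσE ρ hρIb hρE hJac
  have hI'I : I' ≠ I := by
    intro h
    rw [h, hσI] at hσI'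
    exact Option.some_ne_none _ hσI'.symm
  have hνE : ∀ r c, ν r = some c → (SjF c (f r)).Nonempty := by
    intro r c h
    by_cases hr : r = Ib
    · subst hr
      rw [hνIb] at h
      obtain rfl : j = c := Option.some.inj h
      exact hIb
    · exact hνE' r c hr h
  have hI'ne : (SjF j (f I')).Nonempty := hσE I' j hσI'
  -- the two Jacobi-number bounds
  have hb1 : (SjF j (f Ib)).sup id + ∑ c ∈ Finset.univ.erase j, γ c ≤ Jn I' :=
    auxMatchBound f γ hγle j I' Ib hI'Ib.symm ν hνI' hνIb hνE (Jn I') (hJn I')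
  have hb2 : (SjF j (f I')).sup id + ∑ c ∈ Finset.univ.erase j, γ c ≤ Jn I :=
    auxMatchBound f γ hγle j I I' hI'I σ hσI hσI' hσE (Jn I) (hJn I)
  have hγs' : γs = γ j + ∑ c ∈ Finset.univ.erase j, γ c := by
    rw [hγs, ← Finset.add_sum_erase _ _ (Finset.mem_univ j)]
  refine ⟨I', hI'Ib, hI'ne, ?_, fun _ => ?_⟩
  · omega
  · omega
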